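/- For every real r ≥ 1, the function x ↦ Γ(rx)/Γ(x) is monotonically increasing on the interval [1/2, ∞). -/

import Mathlib

open Real

/-- The key numeric sum bound: `∑_{j≤n} j/(j+1/2)^2 ≤ log n` for `n ≥ 4`. -/
lemma gamma_ratio_sum_aux : ∀ n : ℕ, 4 ≤ n →
    ∑ j ∈ Finset.range (n + 1), (j : ℝ) / ((j : ℝ) + 1 / 2) ^ 2 ≤ Real.log n := by
  intro n hn
  induction n, hn using Nat.le_induction with
  | base =>
    have h2 := Real.log_two_gt_d9
    have h4 : Real.log 4 = 2 * Real.log 2 := by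
      rw [show (4 : ℝ) = 2 ^ 2 by norm_num, Real.log_pow]; norm_num
    show ∑ j ∈ Finset.range 5, (j : ℝ) / ((j : ℝ) + 1 / 2) ^ 2 ≤ Real.log (4 : ℕ)
    simp only [Finset.sum_range_succ, Finset.sum_range_zero]
    push_cast
    rw [h4]
    norm_num
    linarith
  | succ n hn ih =>
    rw [Finset.sum_range_succ]
    have hn4 : (4 : ℝ) ≤ (n : ℝ) := by exact_mod_cast hn
    have hlog : Real.log n + 1 / ((n : ℝ) + 1) ≤ Real.log (n + 1) := by
      have hpos : (0 : ℝ) < (n : ℝ) / ((n : ℝ) + 1) := by positivity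
      have h := Real.log_le_sub_one_of_pos hpos
      rw [Real.log_div (by positivity) (by positivity)] at h
      have h' : ((n : ℝ)) / ((n : ℝ) + 1) - 1 = -(1 / ((n : ℝ) + 1)) := by
        field_simp
        ring
      rw [h'] at h
      linarith
    have hterm : ((n : ℝ) + 1) / (((n : ℝ) + 1) + 1 / 2) ^ 2 ≤ 1 / ((n : ℝ) + 1) := by
      rw [div_le_div_iff₀ (by positivity) (by positivity)]
      nlinarith
    push_cast
    push_cast at ih
    linarith

/-- Finite-level inequality for Euler's Gamma sequence. -/
lemma gammaSeq_ineq (r x y : ℝ) (hr : 1 ≤ r) (hx : 1 / 2 ≤ x) (hxy : x ≤ y)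
    (n : ℕ) (hn : 4 ≤ n) :
    Real.GammaSeq (r * x) n * Real.GammaSeq y n
      ≤ Real.GammaSeq (r * y) n * Real.GammaSeq x n := by
  have hx0 : (0 : ℝ) < x := lt_of_lt_of_le (by norm_num) hx
  have hy0 : (0 : ℝ) < y := lt_of_lt_of_le hx0 hxy
  have hy2 : 1 / 2 ≤ y := hx.trans hxy
  have hr0 : (0 : ℝ) < r := lt_of_lt_of_le one_pos hr
  have hrx : x ≤ r * x := le_mul_of_one_le_left hx0.le hr
  have hry : y ≤ r * y := le_mul_of_one_le_left hy0.le hr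
  have hrx0 : (0 : ℝ) < r * x := hx0.trans_le hrx
  have hry0 : (0 : ℝ) < r * y := hy0.trans_le hry
  have hn0 : (0 : ℝ) < (n : ℝ) := by
    have : (4 : ℝ) ≤ (n : ℝ) := by exact_mod_cast hn
    linarith
  have hA : ∀ j ∈ Finset.range (n + 1), (0 : ℝ) < (r * y + j) * (x + j) := by
    intro j _
    have : (0 : ℝ) ≤ (j : ℝ) := Nat.cast_nonneg j
    nlinarith
  have hB : ∀ j ∈ Finset.range (n + 1), (0 : ℝ) < (r * x + j) * (y + j) := by
    intro j _
    have : (0 : ℝ) ≤ (j : ℝ) := Nat.cast_nonneg j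
    nlinarith
  have hApos : (0 : ℝ) < ∏ j ∈ Finset.range (n + 1), ((r * y + j) * (x + j)) :=
    Finset.prod_pos hA
  have hBpos : (0 : ℝ) < ∏ j ∈ Finset.range (n + 1), ((r * x + j) * (y + j)) :=
    Finset.prod_pos hB
  -- the key product inequality
  have key : (n : ℝ) ^ (r * x + y) * ∏ j ∈ Finset.range (n + 1), ((r * y + j) * (x + j))
      ≤ (n : ℝ) ^ (r * y + x) * ∏ j ∈ Finset.range (n + 1), ((r * x + j) * (y + j)) := by
    rw [← Real.log_le_log_iff (by positivity) (by positivity),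
      Real.log_mul (by positivity) hApos.ne', Real.log_mul (by positivity) hBpos.ne',
      Real.log_rpow hn0, Real.log_rpow hn0,
      Real.log_prod (fun j hj => (hA j hj).ne'),
      Real.log_prod (fun j hj => (hB j hj).ne')]
    have hterm : ∀ j ∈ Finset.range (n + 1),
        Real.log ((r * y + j) * (x + j)) - Real.log ((r * x + j) * (y + j))
          ≤ (r - 1) * (y - x) * ((j : ℝ) / ((j : ℝ) + 1 / 2) ^ 2) := by
      intro j hj
      have hj0 : (0 : ℝ) ≤ (j : ℝ) := Nat.cast_nonneg j
      set A := (r * y + j) * (x + j) with hAdef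
      set B := (r * x + j) * (y + j) with hBdef
      have hApos' : (0 : ℝ) < A := hA j hj
      have hBpos' : (0 : ℝ) < B := hB j hj
      have hAB : A - B = (j : ℝ) * (r - 1) * (y - x) := by rw [hAdef, hBdef]; ring
      have hABnn : (0 : ℝ) ≤ A - B := by
        rw [hAB]
        have : (0 : ℝ) ≤ r - 1 := by linarith
        have : (0 : ℝ) ≤ y - x := by linarith
        positivity
      have h1 : Real.log A - Real.log B ≤ A / B - 1 := by
        rw [← Real.log_div hApos'.ne' hBpos'.ne']
        exact Real.log_le_sub_one_of_pos (by positivity)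
      have h2 : A / B - 1 = (A - B) / B := by field_simp
      have hBge : ((j : ℝ) + 1 / 2) ^ 2 ≤ B := by
        rw [hBdef]
        nlinarith
      have h3 : (A - B) / B ≤ (A - B) / ((j : ℝ) + 1 / 2) ^ 2 := by
        gcongr
      have h4 : (A - B) / ((j : ℝ) + 1 / 2) ^ 2
          = (r - 1) * (y - x) * ((j : ℝ) / ((j : ℝ) + 1 / 2) ^ 2) := by
        rw [hAB]; ring
      linarith [h1, h3, h2 ▸ h1, h4 ▸ h3]
    have hsum : ∑ j ∈ Finset.range (n + 1), Real.log ((r * y + j) * (x + j))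
        - ∑ j ∈ Finset.range (n + 1), Real.log ((r * x + j) * (y + j))
        ≤ (r - 1) * (y - x) * ∑ j ∈ Finset.range (n + 1), ((j : ℝ) / ((j : ℝ) + 1 / 2) ^ 2) := by
      rw [← Finset.sum_sub_distrib, Finset.mul_sum]
      exact Finset.sum_le_sum hterm
    have hS := gamma_ratio_sum_aux n hn
    have hc : (0 : ℝ) ≤ (r - 1) * (y - x) := by
      have : (0 : ℝ) ≤ r - 1 := by linarith
      have : (0 : ℝ) ≤ y - x := by linarith
      positivity
    have hS' : (r - 1) * (y - x) * ∑ j ∈ Finset.range (n + 1), ((j : ℝ) / ((j : ℝ) + 1 / 2) ^ 2)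
        ≤ (r - 1) * (y - x) * Real.log n := mul_le_mul_of_nonneg_left hS hc
    have hid : (r * y + x) * Real.log n - (r * x + y) * Real.log n
        = (r - 1) * (y - x) * Real.log n := by ring
    linarith
  -- conclude the GammaSeq inequality
  simp only [Real.GammaSeq]
  rw [div_mul_div_comm, div_mul_div_comm,
    div_le_div_iff₀ (by positivity) (by positivity)]
  have e1 : (n : ℝ) ^ (r * x) * (n.factorial : ℝ) * ((n : ℝ) ^ y * (n.factorial : ℝ))
        * ((∏ j ∈ Finset.range (n + 1), (r * y + j)) * ∏ j ∈ Finset.range (n + 1), (x + j))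
      = (n.factorial : ℝ) ^ 2 * ((n : ℝ) ^ (r * x + y)
        * ∏ j ∈ Finset.range (n + 1), ((r * y + j) * (x + j))) := by
    rw [Real.rpow_add hn0, ← Finset.prod_mul_distrib]; ring
  have e2 : (n : ℝ) ^ (r * y) * (n.factorial : ℝ) * ((n : ℝ) ^ x * (n.factorial : ℝ))
        * ((∏ j ∈ Finset.range (n + 1), (r * x + j)) * ∏ j ∈ Finset.range (n + 1), (y + j))
      = (n.factorial : ℝ) ^ 2 * ((n : ℝ) ^ (r * y + x)
        * ∏ j ∈ Finset.range (n + 1), ((r * x + j) * (y + j))) := by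
    rw [Real.rpow_add hn0, ← Finset.prod_mul_distrib]; ring
  rw [e1, e2]
  have hfact : (0 : ℝ) ≤ (n.factorial : ℝ) ^ 2 := by positivity
  exact mul_le_mul_of_nonneg_left key hfact

theorem gamma_ratio_monotone (r : ℝ) (hr : 1 ≤ r) :
    MonotoneOn (fun x : ℝ => Real.Gamma (r * x) / Real.Gamma x) (Set.Ici (1 / 2 : ℝ)) := by
  intro x hx y hy hxy
  simp only [Set.mem_Ici] at hx hy
  have hx0 : (0 : ℝ) < x := lt_of_lt_of_le (by norm_num) hx
  have hy0 : (0 : ℝ) < y := lt_of_lt_of_le (by norm_num) hy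
  simp only
  rw [div_le_div_iff₀ (Real.Gamma_pos_of_pos hx0) (Real.Gamma_pos_of_pos hy0)]
  refine le_of_tendsto_of_tendsto
    ((Real.GammaSeq_tendsto_Gamma (r * x)).mul (Real.GammaSeq_tendsto_Gamma y))
    ((Real.GammaSeq_tendsto_Gamma (r * y)).mul (Real.GammaSeq_tendsto_Gamma x)) ?_
  filter_upwards [Filter.eventually_ge_atTop 4] with n hn
  exact gammaSeq_ineq r x y hr hx hxy n hn
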